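/- For the cubic g(u) = u^3 - T u^2 - L u + AM with T > 0, L < 0, if the double-root condition holds then the double root equals (T ± 2√(T²+3L))/3; substituting u = (T ± 2√(T²+3L))/3 into g(u) = 0 yields an equation determining the critical values Q = Q^±(A,M), and for A = 1/10, M = -1/10 these values are Q^± = (73 ± √5)/200. -/
import Mathlib


/-- for A = 1/10, M = -1/10, the cubic
g(u) = u³ - (4/5)u² - (19/100 - Q)u - 1/100 has a repeated positive root exactly when
Q = (73 - √5)/200 or Q = (73 + √5)/200. -/
theorem stmt_19 (Q : ℝ) (hQ : 0 < Q)
    (g : ℝ → ℝ)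
    (hg : ∀ u, g u = u ^ 3 - (4 / 5) * u ^ 2 - (19 / 100 - Q) * u - 1 / 100) :
    (∃ u : ℝ, 0 < u ∧ g u = 0 ∧ 3 * u ^ 2 - (8 / 5) * u - (19 / 100 - Q) = 0) ↔
      Q = (73 - Real.sqrt 5) / 200 ∨ Q = (73 + Real.sqrt 5) / 200 := by
  have s5 : Real.sqrt 5 ^ 2 = 5 := Real.sq_sqrt (by norm_num)
  have s5nn : (0:ℝ) ≤ Real.sqrt 5 := Real.sqrt_nonneg 5
  have s5lt : Real.sqrt 5 < 5 := by nlinarith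
  constructor
  · rintro ⟨u, hu, h1, h2⟩
    rw [hg] at h1
    have cube : (u + 1/10) * (20*u^2 - 10*u + 1) = 0 := by
      linear_combination 10*u*h2 - 10*h1
    have key : 20*u^2 - 10*u + 1 = 0 := by
      rcases mul_eq_zero.mp cube with h | h
      · linarith
      · exact h
    have hQu : u = 10*Q - 17/5 := by linear_combination (3/2)*key - 10*h2
    rw [hQu] at key
    have hQquad : 10000*Q^2 - 7300*Q + 1331 = 0 := by linear_combination 5*key
    have h : (200*Q - 73 - Real.sqrt 5) * (200*Q - 73 + Real.sqrt 5) = 0 := by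
      linear_combination 4*hQquad - s5
    rcases mul_eq_zero.mp h with h | h
    · right; linarith
    · left; linarith
  · rintro (rfl | rfl)
    · refine ⟨(5 - Real.sqrt 5)/20, by nlinarith, ?_, ?_⟩
      · rw [hg]; linear_combination ((1 - Real.sqrt 5)/8000) * s5
      · linear_combination (3/400) * s5
    · refine ⟨(5 + Real.sqrt 5)/20, by nlinarith, ?_, ?_⟩
      · rw [hg]; linear_combination ((1 + Real.sqrt 5)/8000) * s5
      · linear_combination (3/400) * s5
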